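/- arXiv:1310.4046 — 4 statements merged into one kernel-verified Lean document; each statement's English description precedes it below -/
import Mathlib

section
/- Let A be self-adjoint positive definite on a finite-dimensional real inner product space, τ > 0 with τ‖A‖ ≤ 2(1−ε) for some 0 < ε < 1. If a sequence (yⁿ) satisfies (yⁿ⁺¹ − yⁿ)/τ + A yⁿ = φⁿ for n = 0,…,N−1 with y⁰ = u⁰, then for every n ≤ N−1: ⟨A yⁿ⁺¹, yⁿ⁺¹⟩ ≤ ⟨A u⁰, u⁰⟩ + (τ/(2ε)) Σ_{k=0}^{n} ‖φᵏ‖². -/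
open RealInnerProductSpace

theorem stmt_1 {H : Type*} [NormedAddCommGroup H] [InnerProductSpace ℝ H]
    [FiniteDimensional ℝ H] (A : H →L[ℝ] H) (hA : IsSelfAdjoint A)
    (hApos : ∀ y : H, y ≠ 0 → 0 < ⟪A y, y⟫) (τ ε : ℝ) (hτ : 0 < τ)
    (hε0 : 0 < ε) (hε1 : ε < 1) (hstep : τ * ‖A‖ ≤ 2 * (1 - ε))
    (N : ℕ) (y φ : ℕ → H) (u0 : H)
    (hscheme : ∀ n < N, (1 / τ) • (y (n + 1) - y n) + A (y n) = φ n)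
    (hinit : y 0 = u0) :
    ∀ n < N, ⟪A (y (n + 1)), y (n + 1)⟫ ≤
      ⟪A u0, u0⟫ + (τ / (2 * ε)) * ∑ k ∈ Finset.range (n + 1), ‖φ k‖ ^ 2 := by
  have key : ∀ n < N, ⟪A (y (n+1)), y (n+1)⟫ ≤
      ⟪A (y n), y n⟫ + (τ / (2 * ε)) * ‖φ n‖ ^ 2 := by
    intro n hn
    set w := y (n + 1) - y n with hw
    have hyn1 : y (n + 1) = y n + w := by rw [hw]; abel
    have hAyn : A (y n) = φ n - (1 / τ) • w := by
      rw [← hscheme n hn]; abel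
    have expand : ⟪A (y (n+1)), y (n+1)⟫
        = ⟪A (y n), y n⟫ + 2 * ⟪A (y n), w⟫ + ⟪A w, w⟫ := by
      rw [hyn1, map_add, inner_add_left, inner_add_right, inner_add_right]
      have hsym : ⟪A w, y n⟫ = ⟪A (y n), w⟫ := by
        rw [show ⟪A w, y n⟫ = ⟪w, A (y n)⟫ from hA.isSymmetric w (y n), real_inner_comm]
      rw [hsym]; ring
    have h1 : ⟪A (y n), w⟫ = ⟪φ n, w⟫ - (1 / τ) * ‖w‖ ^ 2 := by
      rw [hAyn, inner_sub_left, real_inner_smul_left, real_inner_self_eq_norm_sq]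
    have h2 : ⟪A w, w⟫ ≤ ‖A‖ * ‖w‖ ^ 2 := by
      calc ⟪A w, w⟫ ≤ ‖A w‖ * ‖w‖ := real_inner_le_norm _ _
        _ ≤ (‖A‖ * ‖w‖) * ‖w‖ := by
            exact mul_le_mul_of_nonneg_right (A.le_opNorm w) (norm_nonneg w)
        _ = ‖A‖ * ‖w‖ ^ 2 := by ring
    have h3 : ⟪φ n, w⟫ ≤ ‖φ n‖ * ‖w‖ := real_inner_le_norm _ _
    have hε' : (0:ℝ) < 2 * ε := by linarith
    have hprod : (0:ℝ) < 2 * ε * τ := by positivity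
    -- 2⟪φ n, w⟫ ≤ (τ/(2ε))‖φ n‖² + (2ε/τ)‖w‖²
    have h5 : 2 * ⟪φ n, w⟫ ≤ (τ / (2 * ε)) * ‖φ n‖ ^ 2 + 2 * ε * (1 / τ) * ‖w‖ ^ 2 := by
      have e : (τ / (2 * ε)) * ‖φ n‖ ^ 2 + 2 * ε * (1 / τ) * ‖w‖ ^ 2
          = (τ ^ 2 * ‖φ n‖ ^ 2 + (2 * ε) ^ 2 * ‖w‖ ^ 2) / (2 * ε * τ) := by
        field_simp
      rw [e, le_div_iff₀ hprod]
      nlinarith [sq_nonneg (τ * ‖φ n‖ - 2 * ε * ‖w‖), h3, hprod]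
    -- coefficient bound from τ‖A‖ ≤ 2(1-ε)
    have hτinv : (0:ℝ) ≤ 1 / τ := by positivity
    have hmul := mul_le_mul_of_nonneg_right hstep hτinv
    have e2 : τ * ‖A‖ * (1 / τ) = ‖A‖ := by field_simp
    rw [e2] at hmul
    have hcoef : ‖A‖ - 2 * (1 / τ) + 2 * ε * (1 / τ) ≤ 0 := by linarith [hmul]
    have h6 := mul_nonpos_of_nonpos_of_nonneg hcoef (sq_nonneg ‖w‖)
    have h6' : ‖A‖ * ‖w‖ ^ 2 - 2 * (1 / τ) * ‖w‖ ^ 2 + 2 * ε * (1 / τ) * ‖w‖ ^ 2 ≤ 0 := by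
      nlinarith [h6]
    rw [expand, h1]
    linarith [h2, h5, h6']
  intro n hn
  induction n with
  | zero =>
      have := key 0 hn
      rw [hinit] at this
      simpa using this
  | succ m ih =>
      have hmN : m < N := Nat.lt_of_succ_lt hn
      have ihm := ih hmN
      have hk := key (m + 1) hn
      rw [Finset.sum_range_succ, mul_add]
      linarith
end

section
/- With A = A₁ + A₂, A₂ = A₁*, A positive definite, σ ≥ 1/2, τ > 0, and B = (E + στA₁)(E + στA₂), one has B − (τ/2)A ≥ E. -/
open RealInnerProductSpace

theorem stmt_4 {H : Type*} [NormedAddCommGroup H] [InnerProductSpace ℝ H]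
    [FiniteDimensional ℝ H] (A₁ : H →L[ℝ] H) (σ τ : ℝ) (hσ : 1 / 2 ≤ σ) (hτ : 0 < τ)
    (hApos : ∀ y : H, y ≠ 0 → 0 < ⟪(A₁ + ContinuousLinearMap.adjoint A₁) y, y⟫) :
    let A₂ := ContinuousLinearMap.adjoint A₁
    let A := A₁ + A₂
    let B := (1 + (σ * τ) • A₁) ∘L (1 + (σ * τ) • A₂)
    ∀ y : H, ⟪y, y⟫ ≤ ⟪B y - (τ / 2) • A y, y⟫ := by
  intro A₂ A B y
  have hA : 0 ≤ ⟪A y, y⟫ := by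
    rcases eq_or_ne y 0 with h | h
    · simp [h]
    · exact le_of_lt (hApos y h)
  have hadj : ⟪A₁ (A₂ y), y⟫ = ⟪A₂ y, A₂ y⟫ := by
    have : A₁ = ContinuousLinearMap.adjoint A₂ := by
      simp [A₂, ContinuousLinearMap.adjoint_adjoint]
    rw [this, ContinuousLinearMap.adjoint_inner_left]
  have hexp : ⟪B y - (τ / 2) • A y, y⟫
      = ⟪y, y⟫ + (σ * τ - τ / 2) * ⟪A y, y⟫ + (σ * τ)^2 * ⟪A₂ y, A₂ y⟫ := by
    simp only [B, A, ContinuousLinearMap.comp_apply, ContinuousLinearMap.add_apply,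
      ContinuousLinearMap.one_apply, ContinuousLinearMap.smul_apply, map_add, map_smul,
      inner_sub_left, inner_add_left, inner_smul_left, real_inner_comm, hadj]
    ring_nf
    simp only [starRingEnd_apply, star_trivial]
    ring
  rw [hexp]
  have h1 : 0 ≤ (σ * τ - τ / 2) * ⟪A y, y⟫ := by
    apply mul_nonneg _ hA
    nlinarith
  have h2 : 0 ≤ (σ * τ)^2 * ⟪A₂ y, A₂ y⟫ :=
    mul_nonneg (sq_nonneg _) (real_inner_self_nonneg)
  linarith
end

section
/- Let A₁ be a linear operator on a finite-dimensional real inner product space with A₂ = A₁*, A = A₁ + A₂ self-adjoint positive definite, σ ≥ 1/2, τ > 0, B = (E + στA₁)(E + στA₂). If (yⁿ) satisfies B(yⁿ⁺¹ − yⁿ)/τ + Ayⁿ = φⁿ for n = 0,…,N−1 with y⁰ = u⁰, then ⟨Ayⁿ⁺¹, yⁿ⁺¹⟩ ≤ ⟨Au⁰, u⁰⟩ + (τ/2)Σ_{k=0}^n ‖φᵏ‖² for all n ≤ N−1. -/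
open RealInnerProductSpace

theorem stmt_5 {H : Type*} [NormedAddCommGroup H] [InnerProductSpace ℝ H]
    [FiniteDimensional ℝ H] (A₁ : H →L[ℝ] H) (σ τ : ℝ) (hσ : 1 / 2 ≤ σ) (hτ : 0 < τ)
    (hApos : ∀ y : H, y ≠ 0 → 0 < ⟪(A₁ + ContinuousLinearMap.adjoint A₁) y, y⟫)
    (N : ℕ) (y φ : ℕ → H) (u0 : H)
    (hscheme : ∀ n < N,
      ((1 + (σ * τ) • A₁) ∘L (1 + (σ * τ) • ContinuousLinearMap.adjoint A₁))
        ((1 / τ) • (y (n + 1) - y n)) +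
        (A₁ + ContinuousLinearMap.adjoint A₁) (y n) = φ n)
    (hinit : y 0 = u0) :
    ∀ n < N,
      ⟪(A₁ + ContinuousLinearMap.adjoint A₁) (y (n + 1)), y (n + 1)⟫ ≤
        ⟪(A₁ + ContinuousLinearMap.adjoint A₁) u0, u0⟫ +
          (τ / 2) * ∑ k ∈ Finset.range (n + 1), ‖φ k‖ ^ 2 := by
  have hτ' : τ ≠ 0 := ne_of_gt hτ
  set A₂ : H →L[ℝ] H := ContinuousLinearMap.adjoint A₁ with hA₂
  set A : H →L[ℝ] H := A₁ + A₂ with hA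
  have hAsymm : ∀ x z : H, ⟪A x, z⟫ = ⟪A z, x⟫ := by
    intro x z
    simp only [hA, ContinuousLinearMap.add_apply, inner_add_left]
    rw [hA₂, ContinuousLinearMap.adjoint_inner_left,
      ← ContinuousLinearMap.adjoint_inner_right, real_inner_comm (A₁ z) x,
      real_inner_comm x ((ContinuousLinearMap.adjoint A₁) z)]
    ring
  have hAnn : ∀ w : H, 0 ≤ ⟪A w, w⟫ := by
    intro w
    rcases eq_or_ne w 0 with rfl | h
    · simp
    · exact le_of_lt (hApos w h)
  clear_value A₂ A
  -- one-step energy estimate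
  have key : ∀ n, n < N →
      ⟪A (y (n + 1)), y (n + 1)⟫ ≤ ⟪A (y n), y n⟫ + (τ / 2) * ‖φ n‖ ^ 2 := by
    intro n hn
    set w : H := (1 / τ) • (y (n + 1) - y n) with hw
    have hy1 : y (n + 1) = y n + τ • w := by
      rw [hw, smul_smul]
      rw [show τ * (1 / τ) = 1 by field_simp, one_smul]
      abel
    have hsch := hscheme n hn
    rw [← hw] at hsch
    clear_value w
    have hBw : ((1 + (σ * τ) • A₁) ∘L (1 + (σ * τ) • A₂)) w
        = w + (σ * τ) • A₂ w + (σ * τ) • A₁ w + ((σ * τ) * (σ * τ)) • A₁ (A₂ w) := by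
      simp only [ContinuousLinearMap.comp_apply, ContinuousLinearMap.add_apply,
        ContinuousLinearMap.smul_apply, ContinuousLinearMap.one_apply, map_add, map_smul,
        smul_smul, smul_add]
      module
    have hBip : ⟪((1 + (σ * τ) • A₁) ∘L (1 + (σ * τ) • A₂)) w, w⟫
        = ‖w‖ ^ 2 + (σ * τ) * ⟪A w, w⟫ + (σ * τ) ^ 2 * ‖A₂ w‖ ^ 2 := by
      rw [hBw]
      have h1 : ⟪A₁ (A₂ w), w⟫ = ‖A₂ w‖ ^ 2 := by
        rw [hA₂, ← ContinuousLinearMap.adjoint_inner_right, real_inner_self_eq_norm_sq]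
      have h2 : ⟪A₂ w, w⟫ + ⟪A₁ w, w⟫ = ⟪A w, w⟫ := by
        rw [hA]; simp [ContinuousLinearMap.add_apply, inner_add_left]; ring
      simp only [inner_add_left, real_inner_smul_left, h1, real_inner_self_eq_norm_sq]
      linear_combination (σ * τ) * h2
    have hAyn : ⟪A (y n), w⟫ = ⟪φ n, w⟫
        - (‖w‖ ^ 2 + (σ * τ) * ⟪A w, w⟫ + (σ * τ) ^ 2 * ‖A₂ w‖ ^ 2) := by
      rw [← hBip, ← hsch]
      simp [inner_add_left]
    have hexp : ⟪A (y (n + 1)), y (n + 1)⟫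
        = ⟪A (y n), y n⟫ + 2 * τ * ⟪A (y n), w⟫ + τ ^ 2 * ⟪A w, w⟫ := by
      rw [hy1]
      simp only [map_add, map_smul, inner_add_left, inner_add_right,
        real_inner_smul_left, real_inner_smul_right]
      rw [hAsymm w (y n)]
      ring
    have hip : ⟪φ n, w⟫ ≤ ‖φ n‖ * ‖w‖ := real_inner_le_norm _ _
    have hq : 0 ≤ ⟪A w, w⟫ := hAnn w
    rw [hexp, hAyn]
    set P := ⟪A (y n), y n⟫ with hP
    set I := ⟪φ n, w⟫ with hI
    set Q := ⟪A w, w⟫ with hQ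
    set F := ‖φ n‖ with hF
    set W := ‖w‖ with hW
    set R := ‖A₂ w‖ with hR
    clear_value P I Q F W R
    have g1 : 0 ≤ τ * (F - 2 * W) ^ 2 := mul_nonneg hτ.le (sq_nonneg _)
    have g2 : 0 ≤ τ * (F * W - I) := mul_nonneg hτ.le (by linarith)
    have g3 : 0 ≤ τ ^ 2 * Q * (2 * σ - 1) :=
      mul_nonneg (mul_nonneg (sq_nonneg τ) hq) (by linarith)
    have g4 : 0 ≤ τ * ((σ * τ) ^ 2 * R ^ 2) :=
      mul_nonneg hτ.le (mul_nonneg (sq_nonneg _) (sq_nonneg _))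
    nlinarith [g1, g2, g3, g4]
  intro n hn
  induction n with
  | zero =>
    have := key 0 hn
    rw [hinit] at this
    simpa [Finset.sum_range_one] using this
  | succ n ih =>
    have hn' : n < N := Nat.lt_of_succ_lt hn
    have h1 := key (n + 1) hn
    have h2 := ih hn'
    rw [Finset.sum_range_succ]
    linarith
end

section
/- The hyperbolic ATM scheme G(yⁿ⁺¹ − 2yⁿ + yⁿ⁻¹)/τ² + Ayⁿ = φⁿ with G = (E + στ²A₁)(E + στ²A₂) and A = A₁ + A₂ is algebraically equivalent to R(wⁿ⁺¹ − wⁿ)/τ + (1/2)A(vⁿ⁺¹ + vⁿ) = φⁿ, where vⁿ = (yⁿ + yⁿ⁻¹)/2, wⁿ = (yⁿ − yⁿ⁻¹)/τ, and R = E + (σ − 1/4)τ²A + σ²τ⁴A₁A₂. -/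
theorem stmt_15 {H : Type*} [AddCommGroup H] [Module ℝ H]
    (A₁ A₂ : H →ₗ[ℝ] H) (σ τ : ℝ) (hτ : 0 < τ) (ym y yp φ : H) :
    let A := A₁ + A₂
    let G := (LinearMap.id + (σ * τ ^ 2) • A₁) ∘ₗ (LinearMap.id + (σ * τ ^ 2) • A₂)
    let R := LinearMap.id + ((σ - 1 / 4) * τ ^ 2) • A + (σ ^ 2 * τ ^ 4) • (A₁ ∘ₗ A₂)
    let vp := (1 / 2 : ℝ) • (yp + y)
    let v := (1 / 2 : ℝ) • (y + ym)
    let wp := (1 / τ) • (yp - y)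
    let w := (1 / τ) • (y - ym)
    (G ((1 / τ ^ 2) • (yp - 2 • y + ym)) + A y = φ) ↔
      (R ((1 / τ) • (wp - w)) + (1 / 2 : ℝ) • A (vp + v) = φ) := by
  intro A G R vp v wp w
  have hτ' : τ ≠ 0 := ne_of_gt hτ
  have key : G ((1 / τ ^ 2) • (yp - 2 • y + ym)) + A y
      = R ((1 / τ) • (wp - w)) + (1 / 2 : ℝ) • A (vp + v) := by
    simp only [A, G, R, vp, v, wp, w, LinearMap.add_apply, LinearMap.comp_apply,
      LinearMap.smul_apply, LinearMap.id_apply, map_add, map_sub, map_smul, smul_sub,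
      smul_add, smul_smul, two_smul]
    match_scalars <;> field_simp <;> ring
  rw [key]
end
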